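/- Let X be a first countable, noncompact, realcompact (completely regular Hausdorff) space. If p is a P-point of the subspace βX \ X and q is a non-P-point of βX \ X, then the ring C_p is not isomorphic to the ring C_q. -/

import Mathlib

open Filter Topology

set_option synthInstance.maxHeartbeats 1000000
set_option maxHeartbeats 1600000

variable {X : Type*} [TopologicalSpace X]

/-- The continuous extension `f* : βX → ℝ ∪ {∞}` of `f ∈ C(X)` to the Stone–Čech
compactification, with values in the one-point compactification of `ℝ`. -/
noncomputable def fstar (f : C(X, ℝ)) : StoneCech X → OnePoint ℝ :=
  stoneCechExtend (OnePoint.continuous_coe.comp f.continuous)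

/-- The set `C_p = {f ∈ C(X) : f*(p) ∈ ℝ}`. -/
def Cp (p : StoneCech X) : Set C(X, ℝ) :=
  {f : C(X, ℝ) | ∃ r : ℝ, fstar f p = (r : OnePoint ℝ)}

/-- The Hewitt realcompactification `υX`, viewed as the set of points of `βX` at which
every `f ∈ C(X)` has a real value. -/
def upsilon (X : Type*) [TopologicalSpace X] : Set (StoneCech X) :=
  {p | ∀ f : C(X, ℝ), ∃ r : ℝ, fstar f p = (r : OnePoint ℝ)}

lemma fstar_unit (f : C(X, ℝ)) (x : X) :
    fstar f (stoneCechUnit x) = ((f x : ℝ) : OnePoint ℝ) :=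
  congrFun (stoneCechExtend_extends (OnePoint.continuous_coe.comp f.continuous)) x

lemma neBot_comap_stoneCechUnit (p : StoneCech X) :
    (Filter.comap (stoneCechUnit : X → StoneCech X) (𝓝 p)).NeBot := by
  rw [Filter.comap_neBot_iff]
  intro t ht
  rcases mem_closure_iff_nhds.mp (denseRange_stoneCechUnit p) t ht with ⟨y, hyt, x, rfl⟩
  exact ⟨x, hyt⟩

lemma tendsto_fstar (f : C(X, ℝ)) (p : StoneCech X) :
    Filter.Tendsto (fun x : X => ((f x : ℝ) : OnePoint ℝ))
      (Filter.comap (stoneCechUnit : X → StoneCech X) (𝓝 p)) (𝓝 (fstar f p)) := by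
  have h : Filter.Tendsto (fstar f ∘ (stoneCechUnit : X → StoneCech X))
      (Filter.comap (stoneCechUnit : X → StoneCech X) (𝓝 p)) (𝓝 (fstar f p)) :=
    ((continuous_stoneCechExtend (OnePoint.continuous_coe.comp f.continuous)).tendsto p).comp
      tendsto_comap
  simpa [Function.comp_def, fstar_unit] using h

lemma fstar_eq_of_tendsto {f : C(X, ℝ)} {p : StoneCech X} {r : ℝ}
    (h : Filter.Tendsto (fun x : X => f x)
      (Filter.comap (stoneCechUnit : X → StoneCech X) (𝓝 p)) (𝓝 r)) :
    fstar f p = (r : OnePoint ℝ) := by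
  have := neBot_comap_stoneCechUnit p
  exact tendsto_nhds_unique (tendsto_fstar f p)
    ((OnePoint.continuous_coe.tendsto r).comp h)

lemma tendsto_of_fstar_eq {f : C(X, ℝ)} {p : StoneCech X} {r : ℝ}
    (h : fstar f p = (r : OnePoint ℝ)) :
    Filter.Tendsto (fun x : X => f x)
      (Filter.comap (stoneCechUnit : X → StoneCech X) (𝓝 p)) (𝓝 r) := by
  have := tendsto_fstar f p
  rw [h] at this
  exact (OnePoint.isOpenEmbedding_coe.tendsto_nhds_iff).mpr this

/-- The intermediate ring `C_p = {f ∈ C(X) : f*(p) ∈ ℝ}`, as a subring of `C(X)`. -/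
noncomputable def CpRing (p : StoneCech X) : Subring C(X, ℝ) where
  carrier := Cp p
  zero_mem' := ⟨0, fstar_eq_of_tendsto (by simpa using tendsto_const_nhds)⟩
  one_mem' := ⟨1, fstar_eq_of_tendsto (by simpa using tendsto_const_nhds)⟩
  add_mem' := by
    rintro f g ⟨r, hr⟩ ⟨s, hs⟩
    exact ⟨r + s, fstar_eq_of_tendsto (by
      simpa using (tendsto_of_fstar_eq hr).add (tendsto_of_fstar_eq hs))⟩
  mul_mem' := by
    rintro f g ⟨r, hr⟩ ⟨s, hs⟩
    exact ⟨r * s, fstar_eq_of_tendsto (by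
      simpa using (tendsto_of_fstar_eq hr).mul (tendsto_of_fstar_eq hs))⟩
  neg_mem' := by
    rintro f ⟨r, hr⟩
    exact ⟨-r, fstar_eq_of_tendsto (by simpa using (tendsto_of_fstar_eq hr).neg)⟩

/- ===================== auxiliary lemmas ===================== -/

lemma mem_CpRing_iff {f : C(X, ℝ)} {r : StoneCech X} :
    f ∈ CpRing r ↔ ∃ c : ℝ, fstar f r = (c : OnePoint ℝ) := Iff.rfl

lemma fstar_comp (h : C(StoneCech X, ℝ)) (u : StoneCech X) :
    fstar (h.comp ⟨stoneCechUnit, continuous_stoneCechUnit⟩) u = ((h u : ℝ) : OnePoint ℝ) :=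
  fstar_eq_of_tendsto ((h.continuous.tendsto u).comp tendsto_comap)

lemma fstar_const (c : ℝ) (u : StoneCech X) :
    fstar (ContinuousMap.const X c) u = (c : OnePoint ℝ) :=
  fstar_eq_of_tendsto (by simpa using (tendsto_const_nhds : Tendsto (fun _ : X => c) _ (𝓝 c)))

lemma const_mem_CpRing (c : ℝ) (r : StoneCech X) :
    ContinuousMap.const X c ∈ CpRing r := ⟨c, fstar_const c r⟩

lemma fstar_mem_Icc {f : C(X, ℝ)} {a b : ℝ} (h : ∀ x, f x ∈ Set.Icc a b) (r : StoneCech X) :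
    ∃ c ∈ Set.Icc a b, fstar f r = (c : OnePoint ℝ) := by
  have hne := neBot_comap_stoneCechUnit r
  have hK : IsCompact ((fun t : ℝ => (t : OnePoint ℝ)) '' Set.Icc a b) :=
    isCompact_Icc.image OnePoint.continuous_coe
  have hKc : IsClosed ((fun t : ℝ => (t : OnePoint ℝ)) '' Set.Icc a b) := hK.isClosed
  have hmem : fstar f r ∈ (fun t : ℝ => (t : OnePoint ℝ)) '' Set.Icc a b :=
    hKc.mem_of_tendsto (tendsto_fstar f r)
      (Filter.Eventually.of_forall fun x => ⟨f x, h x, rfl⟩)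
  obtain ⟨c, hc, hc'⟩ := hmem
  exact ⟨c, hc, hc'.symm⟩

lemma mem_CpRing_of_Icc {f : C(X, ℝ)} (h : ∀ x, f x ∈ Set.Icc (0:ℝ) 1) (r : StoneCech X) :
    f ∈ CpRing r := by
  obtain ⟨c, _, hc⟩ := fstar_mem_Icc h r
  exact ⟨c, hc⟩

lemma exists_sep {u v : StoneCech X} (huv : u ≠ v) :
    ∃ f : C(X, ℝ), (∀ x, f x ∈ Set.Icc (0:ℝ) 1) ∧
      fstar f u = ((0:ℝ) : OnePoint ℝ) ∧ fstar f v = ((1:ℝ) : OnePoint ℝ) := by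
  obtain ⟨h, h0, h1, hb⟩ := exists_continuous_zero_one_of_isClosed
    (isClosed_singleton (x := u)) (isClosed_singleton (x := v))
    (Set.disjoint_singleton.mpr huv)
  refine ⟨h.comp ⟨stoneCechUnit, continuous_stoneCechUnit⟩, fun x => hb _, ?_, ?_⟩
  · rw [fstar_comp, h0 rfl]; rfl
  · rw [fstar_comp, h1 rfl]; rfl

lemma eq_of_fstar_eq {u v : StoneCech X}
    (h : ∀ f : C(X, ℝ), (∀ x, f x ∈ Set.Icc (0:ℝ) 1) → fstar f u = fstar f v) : u = v := by
  by_contra huv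
  obtain ⟨f, hb, h0, h1⟩ := exists_sep huv
  have := h f hb
  rw [h0, h1] at this
  exact zero_ne_one (OnePoint.coe_eq_coe.mp this)

lemma eq_of_forall_mem_fstar {u v : StoneCech X} (r : StoneCech X)
    (h : ∀ f : C(X, ℝ), f ∈ CpRing r → fstar f u = fstar f v) : u = v :=
  eq_of_fstar_eq fun f hb => h f (mem_CpRing_of_Icc hb r)

lemma fstar_eq_infty {f : C(X, ℝ)} {u : StoneCech X}
    (h : ∀ c : ℝ, fstar f u ≠ (c : OnePoint ℝ)) : fstar f u = OnePoint.infty := by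
  cases hfu : fstar f u with
  | infty => rfl
  | coe c => exact absurd hfu (h c)

lemma tendsto_abs_atTop_of_fstar_infty {f : C(X, ℝ)} {u : StoneCech X}
    (h : ∀ c : ℝ, fstar f u ≠ (c : OnePoint ℝ)) :
    Tendsto (fun x : X => |f x|) (comap (stoneCechUnit : X → StoneCech X) (𝓝 u)) atTop := by
  have h1 : Tendsto (fun x : X => ((f x : ℝ) : OnePoint ℝ))
      (comap (stoneCechUnit : X → StoneCech X) (𝓝 u)) (𝓝 (OnePoint.infty : OnePoint ℝ)) := by
    have := tendsto_fstar f u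
    rwa [fstar_eq_infty h] at this
  have h2 : Tendsto (fun x : X => f x)
      (comap (stoneCechUnit : X → StoneCech X) (𝓝 u)) (cocompact ℝ) := by
    rw [← Filter.coclosedCompact_eq_cocompact, ← OnePoint.comap_coe_nhds_infty,
      tendsto_comap_iff]
    exact h1
  simpa [Real.norm_eq_abs, Function.comp_def] using tendsto_norm_cocompact_atTop.comp h2

lemma exists_escape (r u : StoneCech X) (hru : u ≠ r) {f0 : C(X, ℝ)}
    (hf0 : ∀ c : ℝ, fstar f0 u ≠ (c : OnePoint ℝ)) :
    ∃ g : C(X, ℝ), g ∈ CpRing r ∧ ∀ c : ℝ, fstar g u ≠ (c : OnePoint ℝ) := by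
  obtain ⟨U, W, hUo, hWo, hu, hr, hUW⟩ := t2_separation hru
  obtain ⟨tn, htn, htnc, htnU⟩ := exists_mem_nhds_isClosed_subset (hUo.mem_nhds hu)
  obtain ⟨h, h0, h1, hb⟩ := exists_continuous_zero_one_of_isClosed
    (isClosed_compl_iff.mpr hUo) htnc
    (by rw [Set.disjoint_compl_left_iff_subset]; exact htnU)
  set g : C(X, ℝ) := |f0| * h.comp ⟨stoneCechUnit, continuous_stoneCechUnit⟩ with hg
  have hgx : ∀ x : X, g x = |f0 x| * h (stoneCechUnit x) := fun x => rfl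
  refine ⟨g, ?_, ?_⟩
  · refine ⟨0, fstar_eq_of_tendsto ?_⟩
    have hWmem : (stoneCechUnit : X → StoneCech X) ⁻¹' W ∈
        comap (stoneCechUnit : X → StoneCech X) (𝓝 r) :=
      preimage_mem_comap (hWo.mem_nhds hr)
    have : ∀ x ∈ (stoneCechUnit : X → StoneCech X) ⁻¹' W, g x = 0 := by
      intro x hx
      have hxU : stoneCechUnit x ∈ Uᶜ := fun hxU => Set.disjoint_left.mp hUW hxU hx
      rw [hgx, h0 hxU]
      simp
    refine Tendsto.congr' ?_ tendsto_const_nhds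
    filter_upwards [hWmem] with x hx using (this x hx).symm
  · intro c hc
    have htend : Tendsto (fun x : X => g x)
        (comap (stoneCechUnit : X → StoneCech X) (𝓝 u)) (𝓝 c) := tendsto_of_fstar_eq hc
    have habs := tendsto_abs_atTop_of_fstar_infty hf0
    have htmem : (stoneCechUnit : X → StoneCech X) ⁻¹' tn ∈
        comap (stoneCechUnit : X → StoneCech X) (𝓝 u) := preimage_mem_comap htn
    have heq : ∀ x ∈ (stoneCechUnit : X → StoneCech X) ⁻¹' tn, g x = |f0 x| := by
      intro x hx
      rw [hgx, h1 hx]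
      simp
    have hatTop : Tendsto (fun x : X => g x)
        (comap (stoneCechUnit : X → StoneCech X) (𝓝 u)) atTop := by
      refine Tendsto.congr' ?_ habs
      filter_upwards [htmem] with x hx using (heq x hx).symm
    have hne := neBot_comap_stoneCechUnit u
    have h1' : ∀ᶠ x in comap (stoneCechUnit : X → StoneCech X) (𝓝 u), c + 1 ≤ g x :=
      hatTop.eventually_ge_atTop (c + 1)
    have h2' : ∀ᶠ x in comap (stoneCechUnit : X → StoneCech X) (𝓝 u), g x < c + 1 :=
      htend.eventually_lt_const (by linarith)
    obtain ⟨x, hx1, hx2⟩ := (h1'.and h2').exists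
    linarith

noncomputable def evAt (u : StoneCech X) (f : C(X, ℝ)) : ℝ :=
  Option.elim (fstar f u) 0 id

lemma evAt_eq {u : StoneCech X} {f : C(X, ℝ)} {c : ℝ}
    (h : fstar f u = (c : OnePoint ℝ)) : evAt u f = c := by
  rw [evAt, h]; rfl

lemma fstar_evAt {u : StoneCech X} {f : C(X, ℝ)}
    (h : ∃ c : ℝ, fstar f u = (c : OnePoint ℝ)) :
    fstar f u = ((evAt u f : ℝ) : OnePoint ℝ) := by
  obtain ⟨c, hc⟩ := h
  rw [evAt_eq hc]; exact hc

lemma evAt_unit (x : X) (f : C(X, ℝ)) : evAt (stoneCechUnit x) f = f x :=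
  evAt_eq (fstar_unit f x)

def Pset (r : StoneCech X) : Set (StoneCech X) :=
  Set.range (stoneCechUnit : X → StoneCech X) ∪ {r}

lemma allReal {r u : StoneCech X} (hu : u ∈ Pset r) {f : C(X, ℝ)} (hf : f ∈ CpRing r) :
    ∃ c : ℝ, fstar f u = (c : OnePoint ℝ) := by
  rcases hu with ⟨x, rfl⟩ | hu
  · exact ⟨f x, fstar_unit f x⟩
  · rw [Set.mem_singleton_iff] at hu
    subst hu
    exact hf

lemma fstar_add {f g : C(X, ℝ)} {u : StoneCech X} {a b : ℝ}
    (hf : fstar f u = (a : OnePoint ℝ)) (hg : fstar g u = (b : OnePoint ℝ)) :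
    fstar (f + g) u = ((a + b : ℝ) : OnePoint ℝ) :=
  fstar_eq_of_tendsto (by simpa using (tendsto_of_fstar_eq hf).add (tendsto_of_fstar_eq hg))

lemma fstar_mul {f g : C(X, ℝ)} {u : StoneCech X} {a b : ℝ}
    (hf : fstar f u = (a : OnePoint ℝ)) (hg : fstar g u = (b : OnePoint ℝ)) :
    fstar (f * g) u = ((a * b : ℝ) : OnePoint ℝ) :=
  fstar_eq_of_tendsto (by simpa using (tendsto_of_fstar_eq hf).mul (tendsto_of_fstar_eq hg))

lemma fstar_one (u : StoneCech X) : fstar (1 : C(X, ℝ)) u = ((1:ℝ) : OnePoint ℝ) :=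
  fstar_eq_of_tendsto (by simpa using (tendsto_const_nhds : Tendsto (fun _ : X => (1:ℝ)) _ _))

lemma fstar_zero (u : StoneCech X) : fstar (0 : C(X, ℝ)) u = ((0:ℝ) : OnePoint ℝ) :=
  fstar_eq_of_tendsto (by simpa using (tendsto_const_nhds : Tendsto (fun _ : X => (0:ℝ)) _ _))

noncomputable def evHom (r u : StoneCech X) (hu : u ∈ Pset r) : CpRing r →+* ℝ where
  toFun f := evAt u (f : C(X, ℝ))
  map_one' := evAt_eq (fstar_one u)
  map_zero' := evAt_eq (fstar_zero u)
  map_add' f g := by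
    obtain ⟨a, ha⟩ := allReal hu f.2
    obtain ⟨b, hb⟩ := allReal hu g.2
    show evAt u ((f + g : ↥(CpRing r)) : C(X, ℝ)) = evAt u (f : C(X, ℝ)) + evAt u (g : C(X, ℝ))
    rw [evAt_eq ha, evAt_eq hb]
    exact evAt_eq (fstar_add ha hb)
  map_mul' f g := by
    obtain ⟨a, ha⟩ := allReal hu f.2
    obtain ⟨b, hb⟩ := allReal hu g.2
    show evAt u ((f * g : ↥(CpRing r)) : C(X, ℝ)) = evAt u (f : C(X, ℝ)) * evAt u (g : C(X, ℝ))
    rw [evAt_eq ha, evAt_eq hb]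
    exact evAt_eq (fstar_mul ha hb)

lemma evHom_apply (r u : StoneCech X) (hu : u ∈ Pset r) (f : ↥(CpRing r)) :
    evHom r u hu f = evAt u (f : C(X, ℝ)) := rfl

lemma phi_const {r : StoneCech X} (φ : ↥(CpRing r) →+* ℝ) (c : ℝ) :
    φ ⟨ContinuousMap.const X c, const_mem_CpRing c r⟩ = c := by
  let ρ : ℝ →+* ℝ :=
    { toFun := fun c => φ ⟨ContinuousMap.const X c, const_mem_CpRing c r⟩
      map_one' := by
        show φ ⟨ContinuousMap.const X 1, const_mem_CpRing 1 r⟩ = 1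
        have : (⟨ContinuousMap.const X 1, const_mem_CpRing 1 r⟩ : ↥(CpRing r)) = 1 := by
          ext x; simp
        rw [this, map_one]
      map_zero' := by
        show φ ⟨ContinuousMap.const X 0, const_mem_CpRing 0 r⟩ = 0
        have : (⟨ContinuousMap.const X 0, const_mem_CpRing 0 r⟩ : ↥(CpRing r)) = 0 := by
          ext x; simp
        rw [this, map_zero]
      map_add' := fun a b => by
        show φ ⟨ContinuousMap.const X (a + b), const_mem_CpRing (a + b) r⟩ =
          φ ⟨ContinuousMap.const X a, const_mem_CpRing a r⟩ +
          φ ⟨ContinuousMap.const X b, const_mem_CpRing b r⟩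
        have : (⟨ContinuousMap.const X (a + b), const_mem_CpRing (a + b) r⟩ : ↥(CpRing r)) =
            ⟨ContinuousMap.const X a, const_mem_CpRing a r⟩ +
            ⟨ContinuousMap.const X b, const_mem_CpRing b r⟩ := by
          ext x; simp
        rw [this]; exact map_add φ _ _
      map_mul' := fun a b => by
        show φ ⟨ContinuousMap.const X (a * b), const_mem_CpRing (a * b) r⟩ =
          φ ⟨ContinuousMap.const X a, const_mem_CpRing a r⟩ *
          φ ⟨ContinuousMap.const X b, const_mem_CpRing b r⟩
        have : (⟨ContinuousMap.const X (a * b), const_mem_CpRing (a * b) r⟩ : ↥(CpRing r)) =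
            ⟨ContinuousMap.const X a, const_mem_CpRing a r⟩ *
            ⟨ContinuousMap.const X b, const_mem_CpRing b r⟩ := by
          ext x; simp
        rw [this]; exact map_mul φ _ _ }
  exact DFunLike.congr_fun (Subsingleton.elim ρ (RingHom.id ℝ)) c

lemma phi_ne_zero_of_bddBelow {r : StoneCech X} (φ : ↥(CpRing r) →+* ℝ)
    {f : C(X, ℝ)} (hf : f ∈ CpRing r) {δ : ℝ} (hδ : 0 < δ) (hfl : ∀ x, δ ≤ f x) :
    φ ⟨f, hf⟩ ≠ 0 := by
  obtain ⟨s, hs⟩ := id hf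
  have hne := neBot_comap_stoneCechUnit r
  have hsδ : δ ≤ s :=
    ge_of_tendsto (tendsto_of_fstar_eq hs) (Filter.Eventually.of_forall fun x => hfl x)
  have hfx : ∀ x, f x ≠ 0 := fun x => ne_of_gt (lt_of_lt_of_le hδ (hfl x))
  set finv : C(X, ℝ) := ⟨fun x => (f x)⁻¹, f.continuous.inv₀ hfx⟩ with hfinv
  have hsne : s ≠ 0 := ne_of_gt (lt_of_lt_of_le hδ hsδ)
  have hmem : finv ∈ CpRing r :=
    ⟨s⁻¹, fstar_eq_of_tendsto ((tendsto_of_fstar_eq hs).inv₀ hsne)⟩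
  have hprod : (⟨f, hf⟩ : ↥(CpRing r)) * ⟨finv, hmem⟩ = 1 := by
    ext x
    exact mul_inv_cancel₀ (hfx x)
  intro h0
  have := map_mul φ ⟨f, hf⟩ ⟨finv, hmem⟩
  rw [hprod, map_one, h0, zero_mul] at this
  exact one_ne_zero this

lemma char_exists [Nonempty X]
    (hrc : upsilon X = Set.range (stoneCechUnit : X → StoneCech X))
    (r : StoneCech X) (φ : ↥(CpRing r) →+* ℝ) :
    ∃ u ∈ Pset r, ∀ (f : C(X, ℝ)) (hf : f ∈ CpRing r),
      fstar f u = ((φ ⟨f, hf⟩ : ℝ) : OnePoint ℝ) := by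
  classical
  haveI : Nonempty (StoneCech X) := ⟨stoneCechUnit (Classical.arbitrary X)⟩
  -- the closed sets
  let ι := ↥(CpRing r) × {ε : ℝ // 0 < ε}
  let V : ι → Set X := fun i => {x | |(i.1 : C(X, ℝ)) x - φ i.1| < i.2.1}
  let Z : ι → Set (StoneCech X) := fun i =>
    closure ((stoneCechUnit : X → StoneCech X) '' V i)
  have hZne : (⋂ i, Z i).Nonempty := by
    by_contra hem
    rw [Set.not_nonempty_iff_eq_empty] at hem
    obtain ⟨t, ht⟩ := IsCompact.elim_finite_subfamily_closed isCompact_univ Z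
      (fun i : ι => isClosed_closure)
      (by simpa using hem)
    simp only [Set.univ_inter] at ht
    rcases t.eq_empty_or_nonempty with rfl | htne
    · simp only [Finset.notMem_empty, Set.iInter_of_empty, Set.iInter_univ] at ht
      exact (Set.univ_nonempty (α := StoneCech X)).ne_empty ht
    · -- build g
      set g : ↥(CpRing r) := ∑ i ∈ t,
        (i.1 - ⟨ContinuousMap.const X (φ i.1), const_mem_CpRing _ r⟩) ^ 2 with hg
      have hφg : φ g = 0 := by
        rw [hg, map_sum]
        refine Finset.sum_eq_zero fun i _ => ?_
        rw [map_pow, map_sub, phi_const]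
        ring
      set δ : ℝ := t.inf' htne fun i => i.2.1 ^ 2 with hδdef
      have hδpos : 0 < δ := by
        rw [hδdef, Finset.lt_inf'_iff]
        exact fun i _ => pow_pos i.2.2 2
      have hgval : ∀ x : X, ((g : C(X, ℝ)) x) =
          ∑ i ∈ t, ((i.1 : C(X, ℝ)) x - φ i.1) ^ 2 := by
        intro x
        have : ((g : C(X, ℝ))) = ∑ i ∈ t,
            ((i.1 : C(X, ℝ)) - ContinuousMap.const X (φ i.1)) ^ 2 := by
          rw [hg]
          push_cast
          rfl
        rw [this]
        simp
      have hex : ∃ x : X, ∀ i ∈ t, x ∈ V i := by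
        by_contra hno
        push_neg at hno
        have hlb : ∀ x : X, δ ≤ (g : C(X, ℝ)) x := by
          intro x
          obtain ⟨i, hit, hiv⟩ := hno x
          have h1 : i.2.1 ^ 2 ≤ ((i.1 : C(X, ℝ)) x - φ i.1) ^ 2 := by
            have : i.2.1 ≤ |(i.1 : C(X, ℝ)) x - φ i.1| := not_lt.mp hiv
            calc i.2.1 ^ 2 ≤ |(i.1 : C(X, ℝ)) x - φ i.1| ^ 2 := by
                  exact pow_le_pow_left₀ (le_of_lt i.2.2) this 2
              _ = ((i.1 : C(X, ℝ)) x - φ i.1) ^ 2 := sq_abs _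
          have h2 : ((i.1 : C(X, ℝ)) x - φ i.1) ^ 2 ≤ (g : C(X, ℝ)) x := by
            rw [hgval]
            exact Finset.single_le_sum (f := fun j : ι => ((j.1 : C(X, ℝ)) x - φ j.1) ^ 2)
              (fun j _ => sq_nonneg _) hit
          calc δ ≤ i.2.1 ^ 2 := Finset.inf'_le _ hit
            _ ≤ _ := le_trans h1 h2
        exact phi_ne_zero_of_bddBelow φ g.2 hδpos (by simpa using hlb) (by simpa using hφg)
      obtain ⟨x, hx⟩ := hex
      have : stoneCechUnit x ∈ ⋂ i ∈ t, Z i := by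
        refine Set.mem_iInter₂.mpr fun i hi => subset_closure ⟨x, hx i hi, rfl⟩
      rw [ht] at this
      exact this
  obtain ⟨u, hu⟩ := hZne
  have humem := Set.mem_iInter.mp hu
  -- the value property
  have hval : ∀ (f : C(X, ℝ)) (hf : f ∈ CpRing r),
      fstar f u = ((φ ⟨f, hf⟩ : ℝ) : OnePoint ℝ) := by
    intro f hf
    set c : ℝ := φ ⟨f, hf⟩ with hc
    have key : ∀ ε : ℝ, 0 < ε → ∃ d ∈ Set.Icc (c - ε) (c + ε),
        fstar f u = ((d : ℝ) : OnePoint ℝ) := by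
      intro ε hε
      have hu' := humem ⟨⟨f, hf⟩, ⟨ε, hε⟩⟩
      have himg : fstar f u ∈
          closure (fstar f '' ((stoneCechUnit : X → StoneCech X) '' V ⟨⟨f, hf⟩, ⟨ε, hε⟩⟩)) :=
        image_closure_subset_closure_image
          (continuous_stoneCechExtend (OnePoint.continuous_coe.comp f.continuous))
          ⟨u, hu', rfl⟩
      have hsub : fstar f '' ((stoneCechUnit : X → StoneCech X) '' V ⟨⟨f, hf⟩, ⟨ε, hε⟩⟩) ⊆
          (fun t : ℝ => (t : OnePoint ℝ)) '' Set.Icc (c - ε) (c + ε) := by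
        rintro _ ⟨_, ⟨x, hxV, rfl⟩, rfl⟩
        refine ⟨f x, ?_, (fstar_unit f x).symm⟩
        have := hxV
        simp only [V, Set.mem_setOf_eq] at this
        have h' := abs_lt.mp this
        constructor <;> [linarith [h'.1]; linarith [h'.2]]
      have hclosed : IsClosed ((fun t : ℝ => (t : OnePoint ℝ)) '' Set.Icc (c - ε) (c + ε)) :=
        (isCompact_Icc.image OnePoint.continuous_coe).isClosed
      have := (closure_minimal hsub hclosed) himg
      obtain ⟨d, hd, hd'⟩ := this
      exact ⟨d, hd, hd'.symm⟩
    obtain ⟨d1, hd1, hfd1⟩ := key 1 one_pos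
    have hd1c : d1 = c := by
      have habs : ∀ ε : ℝ, 0 < ε → |d1 - c| ≤ ε := by
        intro ε hε
        obtain ⟨d, hd, hfd⟩ := key ε hε
        have : d = d1 := by
          rw [hfd] at hfd1
          exact OnePoint.coe_eq_coe.mp hfd1
        subst this
        rw [abs_le]
        constructor <;> [linarith [hd.1]; linarith [hd.2]]
      have : |d1 - c| ≤ 0 := le_of_forall_pos_le_add (by
        intro ε hε
        simpa using habs ε hε)
      have := le_antisymm this (abs_nonneg _)
      have := abs_eq_zero.mp this
      linarith [sub_eq_zero.mp this]
    rw [hd1c] at hfd1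
    exact hfd1
  refine ⟨u, ?_, hval⟩
  -- u is in Pset r
  by_contra hup
  have hnr : u ∉ Set.range (stoneCechUnit : X → StoneCech X) := fun h =>
    hup (Set.mem_union_left _ h)
  have hur : u ≠ r := fun h =>
    hup (Set.mem_union_right _ (by rw [h]; exact Set.mem_singleton r))
  have hnup : u ∉ upsilon X := by rw [hrc]; exact hnr
  have hexf : ∃ f0 : C(X, ℝ), ∀ c : ℝ, fstar f0 u ≠ (c : OnePoint ℝ) := by
    by_contra h
    push_neg at h
    exact hnup fun f => h f
  obtain ⟨f0, hf0⟩ := hexf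
  obtain ⟨g, hg, hgne⟩ := exists_escape r u hur hf0
  exact hgne (φ ⟨g, hg⟩) (hval g hg)

lemma continuous_into_beta {A : Type*} [TopologicalSpace A] {t : A → StoneCech X}
    (h : ∀ f : C(X, ℝ), (∀ x, f x ∈ Set.Icc (0:ℝ) 1) → Continuous fun a => fstar f (t a)) :
    Continuous t := by
  set E : StoneCech X → ({f : C(X, ℝ) // ∀ x, f x ∈ Set.Icc (0:ℝ) 1} → OnePoint ℝ) :=
    fun u f => fstar f.1 u with hE
  have hEc : Continuous E :=
    continuous_pi fun f => continuous_stoneCechExtend _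
  have hEi : Function.Injective E := by
    intro u v huv
    exact eq_of_fstar_eq fun f hb => congrFun huv ⟨f, hb⟩
  have hEemb : IsClosedEmbedding E := hEc.isClosedEmbedding hEi
  rw [hEemb.isEmbedding.continuous_iff]
  exact continuous_pi fun f => h f.1 f.2

lemma continuous_evAt_Pset (r : StoneCech X) (g : C(X, ℝ)) (hg : g ∈ CpRing r) :
    Continuous fun u : ↥(Pset r) => evAt u.1 g := by
  have h1 : Continuous fun u : ↥(Pset r) => fstar g u.1 :=
    (continuous_stoneCechExtend _).comp continuous_subtype_val
  have h2 : (fun u : ↥(Pset r) => fstar g u.1) =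
      fun u : ↥(Pset r) => ((evAt u.1 g : ℝ) : OnePoint ℝ) :=
    funext fun u => fstar_evAt (allReal u.2 hg)
  rw [h2] at h1
  exact (OnePoint.isOpenEmbedding_coe.isEmbedding.continuous_iff).mpr h1

lemma exists_t [Nonempty X]
    (hrc : upsilon X = Set.range (stoneCechUnit : X → StoneCech X))
    (p q : StoneCech X) (Φ : ↥(CpRing p) →+* ↥(CpRing q)) :
    ∃ t : ↥(Pset q) → ↥(Pset p), Continuous t ∧
      ∀ (u : ↥(Pset q)) (f : C(X, ℝ)) (hf : f ∈ CpRing p),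
        fstar f (t u).1 = ((evAt u.1 ((Φ ⟨f, hf⟩ : ↥(CpRing q)) : C(X, ℝ)) : ℝ) : OnePoint ℝ) := by
  have key : ∀ u : ↥(Pset q), ∃ u' ∈ Pset p, ∀ (f : C(X, ℝ)) (hf : f ∈ CpRing p),
      fstar f u' = ((evAt u.1 ((Φ ⟨f, hf⟩ : ↥(CpRing q)) : C(X, ℝ)) : ℝ) : OnePoint ℝ) := by
    intro u
    obtain ⟨u', hu', hval⟩ := char_exists hrc p ((evHom q u.1 u.2).comp Φ)
    exact ⟨u', hu', fun f hf => hval f hf⟩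
  choose t' ht'mem ht'val using key
  refine ⟨fun u => ⟨t' u, ht'mem u⟩, ?_, fun u f hf => ht'val u f hf⟩
  apply Continuous.subtype_mk
  apply continuous_into_beta
  intro f hb
  have : (fun u : ↥(Pset q) => fstar f (t' u)) = fun u : ↥(Pset q) =>
      ((evAt u.1 ((Φ ⟨f, mem_CpRing_of_Icc hb p⟩ : ↥(CpRing q)) : C(X, ℝ)) : ℝ) : OnePoint ℝ) :=
    funext fun u => ht'val u f (mem_CpRing_of_Icc hb p)
  rw [this]
  exact OnePoint.continuous_coe.comp
    (continuous_evAt_Pset q _ (Φ ⟨f, mem_CpRing_of_Icc hb p⟩).2)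

lemma exists_open_unit [CompletelyRegularSpace X] {x : X} {U : Set X} (hU : U ∈ 𝓝 x) :
    ∃ B : Set (StoneCech X), IsOpen B ∧ stoneCechUnit x ∈ B ∧
      (stoneCechUnit : X → StoneCech X) ⁻¹' B ⊆ U := by
  have hxint : x ∈ interior U := mem_interior_iff_mem_nhds.mpr hU
  obtain ⟨f, hfc, hfx, hfK⟩ := CompletelyRegularSpace.completely_regular x (interior U)ᶜ
    (isClosed_compl_iff.mpr isOpen_interior) (by simpa using hxint)
  set g : StoneCech X → unitInterval := stoneCechExtend hfc with hg
  refine ⟨(fun u => (g u : ℝ)) ⁻¹' Set.Iio (1 : ℝ), ?_, ?_, ?_⟩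
  · exact (continuous_subtype_val.comp (continuous_stoneCechExtend hfc)).isOpen_preimage _
      isOpen_Iio
  · have : g (stoneCechUnit x) = f x := congrFun (stoneCechExtend_extends hfc) x
    simp only [Set.mem_preimage, this, hfx]
    norm_num
  · intro y hy
    simp only [Set.mem_preimage, Set.mem_Iio] at hy
    have hgy : g (stoneCechUnit y) = f y := congrFun (stoneCechExtend_extends hfc) y
    rw [hgy] at hy
    by_contra hyU
    have hyK : y ∈ (interior U)ᶜ := fun hyint => hyU (interior_subset hyint)
    have := hfK hyK
    rw [this] at hy
    norm_num at hy

lemma no_seq (hrc : upsilon X = Set.range (stoneCechUnit : X → StoneCech X))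
    (r : StoneCech X) (hr : r ∉ Set.range (stoneCechUnit : X → StoneCech X))
    (xs : ℕ → X)
    (hconv : Tendsto (fun k => stoneCechUnit (xs k)) atTop (𝓝 r)) : False := by
  have hnup : r ∉ upsilon X := by rw [hrc]; exact hr
  have hexf : ∃ f0 : C(X, ℝ), ∀ c : ℝ, fstar f0 r ≠ (c : OnePoint ℝ) := by
    by_contra h
    push_neg at h
    exact hnup fun f => h f
  obtain ⟨f0, hf0⟩ := hexf
  have hb : Tendsto (fun k => |f0 (xs k)|) atTop atTop := by
    have h1 : Tendsto (fun k => fstar f0 (stoneCechUnit (xs k))) atTop (𝓝 (fstar f0 r)) :=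
      ((continuous_stoneCechExtend _).tendsto r).comp hconv
    rw [fstar_eq_infty hf0] at h1
    have h1' : Tendsto (fun k => ((f0 (xs k) : ℝ) : OnePoint ℝ)) atTop
        (𝓝 (OnePoint.infty : OnePoint ℝ)) := by
      have : (fun k => fstar f0 (stoneCechUnit (xs k))) =
          fun k => ((f0 (xs k) : ℝ) : OnePoint ℝ) := funext fun k => fstar_unit f0 (xs k)
      rwa [this] at h1
    have h2 : Tendsto (fun k => f0 (xs k)) atTop (cocompact ℝ) := by
      rw [← Filter.coclosedCompact_eq_cocompact, ← OnePoint.comap_coe_nhds_infty,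
        tendsto_comap_iff]
      exact h1'
    simpa [Real.norm_eq_abs, Function.comp_def] using tendsto_norm_cocompact_atTop.comp h2
  set b : ℕ → ℝ := fun k => |f0 (xs k)| with hbdef
  choose N hNs using fun C : ℝ => eventually_atTop.mp (hb.eventually_ge_atTop C)
  set m : ℕ → ℕ := fun k => Nat.rec (N 1) (fun _ mk => max (N (b mk + 1)) (mk + 1)) k with hm
  have hmsucc : ∀ k, b (m k) + 1 ≤ b (m (k + 1)) ∧ m k < m (k + 1) := by
    intro k
    constructor
    · exact hNs (b (m k) + 1) _ (le_max_left _ _)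
    · exact lt_of_lt_of_le (Nat.lt_succ_self _) (le_max_right _ _)
  have hmono : StrictMono m := strictMono_nat_of_lt_succ fun k => (hmsucc k).2
  set a : ℕ → ℝ := fun k => b (m k) with ha
  have hstep : ∀ k l : ℕ, k < l → a k + 1 ≤ a l := by
    intro k l hkl
    induction l with
    | zero => omega
    | succ l ih =>
      rcases Nat.lt_succ_iff_lt_or_eq.mp hkl with h | h
      · linarith [(hmsucc l).1, ih h]
      · subst h; exact (hmsucc k).1
  set E : Set ℝ := Set.range fun i => a (2 * i) with hE
  set F : Set ℝ := Set.range fun i => a (2 * i + 1) with hF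
  have hEF : ∀ e ∈ E, ∀ fv ∈ F, 1 ≤ dist e fv := by
    rintro _ ⟨i, rfl⟩ _ ⟨j, rfl⟩
    rw [Real.dist_eq]
    rcases lt_or_gt_of_ne (show 2 * i ≠ 2 * j + 1 by omega) with h | h
    · have h1 := hstep _ _ h
      rw [abs_of_nonpos (by linarith)]
      linarith
    · have h1 := hstep _ _ h
      rw [abs_of_nonneg (by linarith)]
      linarith
  have hEne : E.Nonempty := ⟨a 0, 0, rfl⟩
  have hFne : F.Nonempty := ⟨a 1, 0, rfl⟩
  have hden : ∀ v : ℝ, 1 ≤ Metric.infDist v E + Metric.infDist v F := by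
    intro v
    refine le_of_forall_pos_le_add fun ε hε => ?_
    obtain ⟨e, heE, he⟩ := (Metric.infDist_lt_iff hEne).mp
      (lt_add_of_pos_right _ (half_pos hε) : Metric.infDist v E < Metric.infDist v E + ε / 2)
    obtain ⟨fv, hfF, hf⟩ := (Metric.infDist_lt_iff hFne).mp
      (lt_add_of_pos_right _ (half_pos hε) : Metric.infDist v F < Metric.infDist v F + ε / 2)
    have h1 := hEF e heE fv hfF
    have h2 : dist e fv ≤ dist v e + dist v fv := by
      rw [dist_comm v e]
      exact dist_triangle e v fv
    linarith
  have hdenpos : ∀ v : ℝ, Metric.infDist v E + Metric.infDist v F ≠ 0 := fun v =>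
    ne_of_gt (lt_of_lt_of_le one_pos (hden v))
  have hcontψ : Continuous fun v : ℝ =>
      Metric.infDist v E / (Metric.infDist v E + Metric.infDist v F) :=
    (Metric.continuous_infDist_pt E).div
      ((Metric.continuous_infDist_pt E).add (Metric.continuous_infDist_pt F)) hdenpos
  set hh : C(X, ℝ) := ⟨fun y => Metric.infDist (|f0 y|) E /
      (Metric.infDist (|f0 y|) E + Metric.infDist (|f0 y|) F),
    hcontψ.comp (continuous_abs.comp f0.continuous)⟩ with hhh
  have hveven : ∀ i, hh (xs (m (2 * i))) = 0 := by
    intro i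
    have h0 : Metric.infDist (a (2 * i)) E = 0 := Metric.infDist_zero_of_mem ⟨i, rfl⟩
    show Metric.infDist (|f0 (xs (m (2 * i)))|) E / _ = 0
    have : |f0 (xs (m (2 * i)))| = a (2 * i) := rfl
    rw [this, h0, zero_div]
  have hvodd : ∀ i, hh (xs (m (2 * i + 1))) = 1 := by
    intro i
    have h0 : Metric.infDist (a (2 * i + 1)) F = 0 := Metric.infDist_zero_of_mem ⟨i, rfl⟩
    have h1 : 1 ≤ Metric.infDist (a (2 * i + 1)) E := by
      by_contra hlt
      obtain ⟨e, heE, he⟩ := (Metric.infDist_lt_iff hEne).mp (not_le.mp hlt)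
      have := hEF e heE (a (2 * i + 1)) ⟨i, rfl⟩
      rw [dist_comm] at he
      linarith
    show Metric.infDist (|f0 (xs (m (2 * i + 1)))|) E /
        (Metric.infDist (|f0 (xs (m (2 * i + 1)))|) E +
          Metric.infDist (|f0 (xs (m (2 * i + 1)))|) F) = 1
    have heq : |f0 (xs (m (2 * i + 1)))| = a (2 * i + 1) := rfl
    rw [heq, h0, add_zero, div_self (ne_of_gt (lt_of_lt_of_le one_pos h1))]
  have hts : ∀ c : ℕ → ℕ, StrictMono c →
      Tendsto (fun i => fstar hh (stoneCechUnit (xs (m (c i))))) atTop (𝓝 (fstar hh r)) := by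
    intro c hc
    exact ((continuous_stoneCechExtend _).tendsto r).comp
      (hconv.comp ((hmono.comp hc).tendsto_atTop))
  have heven : fstar hh r = ((0 : ℝ) : OnePoint ℝ) := by
    have h1 := hts (fun i => 2 * i) (fun i j hij => by show 2 * i < 2 * j; omega)
    have h2 : (fun i => fstar hh (stoneCechUnit (xs (m (2 * i))))) =
        fun _ => ((0 : ℝ) : OnePoint ℝ) := by
      funext i
      rw [fstar_unit, hveven i]
    rw [h2] at h1
    exact tendsto_nhds_unique h1 tendsto_const_nhds
  have hodd : fstar hh r = ((1 : ℝ) : OnePoint ℝ) := by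
    have h1 := hts (fun i => 2 * i + 1) (fun i j hij => by show 2 * i + 1 < 2 * j + 1; omega)
    have h2 : (fun i => fstar hh (stoneCechUnit (xs (m (2 * i + 1))))) =
        fun _ => ((1 : ℝ) : OnePoint ℝ) := by
      funext i
      rw [fstar_unit, hvodd i]
    rw [h2] at h1
    exact tendsto_nhds_unique h1 tendsto_const_nhds
  rw [heven] at hodd
  exact zero_ne_one (OnePoint.coe_eq_coe.mp hodd)


/-- Let `X` be a first countable, noncompact, realcompact space. If `p` is a `P`-point of the
subspace `βX \ X` (its neighbourhood filter is closed under countable intersections) and `q`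
is a non-`P`-point of `βX \ X`, then the ring `C_p` is not isomorphic to the ring `C_q`. -/
theorem statement10 [T2Space X] [CompletelyRegularSpace X]
    [FirstCountableTopology X]
    (hnc : ¬ CompactSpace X)
    (hrc : upsilon X = Set.range (stoneCechUnit : X → StoneCech X))
    (p q : ((Set.range (stoneCechUnit : X → StoneCech X))ᶜ : Set (StoneCech X)))
    (hp : CountableInterFilter (𝓝 p))
    (hq : ¬ CountableInterFilter (𝓝 q)) :
    ¬ Nonempty (CpRing (p : StoneCech X) ≃+* CpRing (q : StoneCech X)) := by
  rintro ⟨Φe⟩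
  haveI hXne : Nonempty X := by
    by_contra hne
    rw [not_nonempty_iff] at hne
    exact hnc ⟨by rw [Set.univ_eq_empty_iff.mpr hne]; exact isCompact_empty⟩
  have hpnr : (p : StoneCech X) ∉ Set.range (stoneCechUnit : X → StoneCech X) := p.2
  have hqnr : (q : StoneCech X) ∉ Set.range (stoneCechUnit : X → StoneCech X) := q.2
  obtain ⟨t, tc, tspec⟩ := exists_t hrc (p : StoneCech X) (q : StoneCech X) Φe.toRingHom
  obtain ⟨s, sc, sspec⟩ := exists_t hrc (q : StoneCech X) (p : StoneCech X) Φe.symm.toRingHom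
  -- s and t are mutually inverse
  have hst : ∀ u, s (t u) = u := by
    intro u
    apply Subtype.ext
    apply eq_of_forall_mem_fstar (q : StoneCech X)
    intro f hf
    have h1 := sspec (t u) f hf
    set g : ↥(CpRing (p : StoneCech X)) := Φe.symm.toRingHom ⟨f, hf⟩ with hgdef
    have h2 := tspec u (g : C(X, ℝ)) g.2
    have h3 : Φe.toRingHom ⟨(g : C(X, ℝ)), g.2⟩ = ⟨f, hf⟩ := by
      have he : (⟨(g : C(X, ℝ)), g.2⟩ : ↥(CpRing (p : StoneCech X))) = g := rfl
      rw [he, hgdef]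
      exact Φe.apply_symm_apply ⟨f, hf⟩
    rw [h3] at h2
    have h4 : evAt (t u).1 (g : C(X, ℝ)) = evAt u.1 f := evAt_eq h2
    rw [h1, h4]
    exact (fstar_evAt (allReal u.2 hf)).symm
  have hts : ∀ w, t (s w) = w := by
    intro w
    apply Subtype.ext
    apply eq_of_forall_mem_fstar (p : StoneCech X)
    intro f hf
    have h1 := tspec (s w) f hf
    set g : ↥(CpRing (q : StoneCech X)) := Φe.toRingHom ⟨f, hf⟩ with hgdef
    have h2 := sspec w (g : C(X, ℝ)) g.2
    have h3 : Φe.symm.toRingHom ⟨(g : C(X, ℝ)), g.2⟩ = ⟨f, hf⟩ := by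
      have he : (⟨(g : C(X, ℝ)), g.2⟩ : ↥(CpRing (q : StoneCech X))) = g := rfl
      rw [he, hgdef]
      exact Φe.symm_apply_apply ⟨f, hf⟩
    rw [h3] at h2
    have h4 : evAt (s w).1 (g : C(X, ℝ)) = evAt w.1 f := evAt_eq h2
    rw [h1, h4]
    exact (fstar_evAt (allReal w.2 hf)).symm
  -- special points
  set qpt : ↥(Pset (q : StoneCech X)) :=
    ⟨(q : StoneCech X), Set.mem_union_right _ (Set.mem_singleton _)⟩ with hqpt
  set ppt : ↥(Pset (p : StoneCech X)) :=
    ⟨(p : StoneCech X), Set.mem_union_right _ (Set.mem_singleton _)⟩ with hppt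
  set jq : X → ↥(Pset (q : StoneCech X)) :=
    fun x => ⟨stoneCechUnit x, Set.mem_union_left _ ⟨x, rfl⟩⟩ with hjq
  set jp : X → ↥(Pset (p : StoneCech X)) :=
    fun x => ⟨stoneCechUnit x, Set.mem_union_left _ ⟨x, rfl⟩⟩ with hjp
  -- t maps q to p
  have htq : t qpt = ppt := by
    rcases (t qpt).2 with ⟨x₀, hx₀⟩ | htp
    · -- contradiction via a sequence converging to q
      exfalso
      obtain ⟨U, hU⟩ := (𝓝 x₀).exists_antitone_basis
      choose B hBo hBmem hBsub using
        fun n => exists_open_unit (hU.1.mem_of_mem (trivial : True) : U n ∈ 𝓝 x₀)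
      have hDo : ∀ n, IsOpen ((fun u : ↥(Pset (q : StoneCech X)) => (t u).1) ⁻¹' B n) :=
        fun n => (continuous_subtype_val.comp tc).isOpen_preimage _ (hBo n)
      choose G hGo hGeq using fun n => isOpen_induced_iff.mp (hDo n)
      have hqG : ∀ n, (q : StoneCech X) ∈ G n := by
        intro n
        have h1 : qpt ∈ (fun u : ↥(Pset (q : StoneCech X)) => (t u).1) ⁻¹' B n := by
          show (t qpt).1 ∈ B n
          rw [← hx₀]; exact hBmem n
        rw [← hGeq n] at h1
        exact h1
      set z : ↥(Pset (q : StoneCech X)) := s ppt with hz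
      have hzq : z.1 ≠ (q : StoneCech X) := by
        intro h
        have hzq' : z = qpt := Subtype.ext h
        have : t qpt = ppt := by rw [← hzq', hz]; exact hts ppt
        have : (t qpt).1 = (p : StoneCech X) := by rw [this]
        rw [← hx₀] at this
        exact hpnr ⟨x₀, this⟩
      have hOopen : ∀ k, IsOpen ((⋂ n ∈ Finset.range (k+1), G n) ∩ {z.1}ᶜ) := fun k =>
        (isOpen_biInter_finset fun n _ => hGo n).inter isClosed_singleton.isOpen_compl
      have hOq : ∀ k, (q : StoneCech X) ∈ (⋂ n ∈ Finset.range (k+1), G n) ∩ {z.1}ᶜ := by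
        intro k
        refine ⟨Set.mem_iInter₂.mpr fun n _ => hqG n, fun h => hzq ?_⟩
        rw [Set.mem_singleton_iff] at h
        exact h.symm
      choose xseq hxseq using fun k =>
        (denseRange_stoneCechUnit (α := X)).exists_mem_open (hOopen k) ⟨_, hOq k⟩
      have hkey : ∀ sset ∈ 𝓝 (q : StoneCech X),
          ∃ n₀, ∀ k ≥ n₀, stoneCechUnit (xseq k) ∈ sset := by
        intro sset hsset
        obtain ⟨O, hOsub, hOo, hOqq⟩ := mem_nhds_iff.mp hsset
        have hm₀c : Continuous fun x : X => (s (jp x)).1 :=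
          continuous_subtype_val.comp (sc.comp
            (Continuous.subtype_mk continuous_stoneCechUnit _))
        have hm₀x₀ : (s (jp x₀)).1 = (q : StoneCech X) := by
          have h1 : jp x₀ = t qpt := Subtype.ext hx₀
          rw [h1, hst qpt]
        have hpre : (fun x : X => (s (jp x)).1) ⁻¹' O ∈ 𝓝 x₀ :=
          hm₀c.continuousAt.preimage_mem_nhds (hOo.mem_nhds (by rw [hm₀x₀]; exact hOqq))
        obtain ⟨n₀, -, hn₀⟩ := hU.1.mem_iff.mp hpre
        refine ⟨n₀, fun k hk => ?_⟩
        have h1 : stoneCechUnit (xseq k) ∈ G n₀ :=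
          Set.mem_iInter₂.mp (hxseq k).1 n₀ (Finset.mem_range.mpr (by omega))
        have h2 : jq (xseq k) ∈ (fun u : ↥(Pset (q : StoneCech X)) => (t u).1) ⁻¹' B n₀ := by
          rw [← hGeq n₀]
          exact h1
        have h3 : (t (jq (xseq k))).1 ∈ B n₀ := h2
        have h4 : t (jq (xseq k)) ≠ ppt := by
          intro h
          have : jq (xseq k) = s ppt := by rw [← h, hst]
          have : stoneCechUnit (xseq k) = z.1 := by rw [hz, ← this]
          exact (hxseq k).2 this
        have h5 : (t (jq (xseq k))).1 ∈ Set.range (stoneCechUnit : X → StoneCech X) := by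
          rcases (t (jq (xseq k))).2 with h | h
          · exact h
          · exact absurd (Subtype.ext (show (t (jq (xseq k))).1 = (p : StoneCech X) from
              Set.mem_singleton_iff.mp h)) h4
        obtain ⟨y, hy⟩ := h5
        have h6 : y ∈ U n₀ := hBsub n₀ (by rw [Set.mem_preimage, hy]; exact h3)
        have h7 : (s (jp y)).1 ∈ O := hn₀ h6
        have h8 : jp y = t (jq (xseq k)) := Subtype.ext hy
        rw [h8, hst] at h7
        exact hOsub h7
      have hconv : Tendsto (fun k => stoneCechUnit (xseq k)) atTop (𝓝 (q : StoneCech X)) := by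
        intro sset hsset
        obtain ⟨n₀, hn₀⟩ := hkey sset hsset
        rw [Filter.mem_map]
        exact mem_of_superset (eventually_ge_atTop n₀) fun k hk => hn₀ k hk
      exact no_seq hrc (q : StoneCech X) hqnr xseq hconv
    · exact Subtype.ext (Set.mem_singleton_iff.mp htp)
  -- now build the homeomorphism H of βX
  have hsp : s ppt = qpt := by rw [← htq]; exact hst qpt
  have htne : ∀ x : X, t (jq x) ≠ ppt := by
    intro x h
    have h1 : jq x = s ppt := by rw [← h, hst]
    rw [hsp] at h1
    exact hqnr ⟨x, congrArg Subtype.val h1⟩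
  have hsne : ∀ x : X, s (jp x) ≠ qpt := by
    intro x h
    have h1 : jp x = t qpt := by rw [← h, hts]
    rw [htq] at h1
    exact hpnr ⟨x, congrArg Subtype.val h1⟩
  have htrange : ∀ x : X, ∃ y : X, stoneCechUnit y = (t (jq x)).1 := by
    intro x
    rcases (t (jq x)).2 with h | h
    · exact h
    · exact absurd (Subtype.ext (show (t (jq x)).1 = (p : StoneCech X) from
        Set.mem_singleton_iff.mp h)) (htne x)
  have hsrange : ∀ x : X, ∃ y : X, stoneCechUnit y = (s (jp x)).1 := by
    intro x
    rcases (s (jp x)).2 with h | h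
    · exact h
    · exact absurd (Subtype.ext (show (s (jp x)).1 = (q : StoneCech X) from
        Set.mem_singleton_iff.mp h)) (hsne x)
  choose yof hyof using htrange
  choose yof' hyof' using hsrange
  have hmXc : Continuous fun x : X => (t (jq x)).1 :=
    continuous_subtype_val.comp (tc.comp (Continuous.subtype_mk continuous_stoneCechUnit _))
  have hmX'c : Continuous fun x : X => (s (jp x)).1 :=
    continuous_subtype_val.comp (sc.comp (Continuous.subtype_mk continuous_stoneCechUnit _))
  set H : StoneCech X → StoneCech X := stoneCechExtend hmXc with hH
  set H' : StoneCech X → StoneCech X := stoneCechExtend hmX'c with hH'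
  have hHc : Continuous H := continuous_stoneCechExtend hmXc
  have hH'c : Continuous H' := continuous_stoneCechExtend hmX'c
  have hHunit : ∀ x : X, H (stoneCechUnit x) = (t (jq x)).1 :=
    congrFun (stoneCechExtend_extends hmXc)
  have hH'unit : ∀ x : X, H' (stoneCechUnit x) = (s (jp x)).1 :=
    congrFun (stoneCechExtend_extends hmX'c)
  have hH'H : ∀ u, H' (H u) = u := by
    have h1 : H' ∘ H = id := by
      apply stoneCech_hom_ext (hH'c.comp hHc) continuous_id
      funext x
      show H' (H (stoneCechUnit x)) = stoneCechUnit x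
      rw [hHunit, ← hyof x, hH'unit]
      have h2 : jp (yof x) = t (jq x) := Subtype.ext (hyof x)
      rw [h2, hst]
    exact fun u => congrFun h1 u
  have hHH' : ∀ u, H (H' u) = u := by
    have h1 : H ∘ H' = id := by
      apply stoneCech_hom_ext (hHc.comp hH'c) continuous_id
      funext x
      show H (H' (stoneCechUnit x)) = stoneCechUnit x
      rw [hH'unit, ← hyof' x, hHunit]
      have h2 : jq (yof' x) = s (jp x) := Subtype.ext (hyof' x)
      rw [h2, hts]
    exact fun u => congrFun h1 u
  -- H sends q to p
  have hHq : H (q : StoneCech X) = (p : StoneCech X) := by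
    have hdense : Dense {u : ↥(Pset (q : StoneCech X)) |
        u.1 ∈ Set.range (stoneCechUnit : X → StoneCech X)} := by
      intro u
      rw [mem_closure_iff]
      intro o ho hu
      obtain ⟨O, hOo, hOeq⟩ := isOpen_induced_iff.mp ho
      have hu1 : u.1 ∈ O := by rw [← hOeq] at hu; exact hu
      obtain ⟨x, hx⟩ := (denseRange_stoneCechUnit (α := X)).exists_mem_open hOo ⟨u.1, hu1⟩
      refine ⟨⟨stoneCechUnit x, Set.mem_union_left _ ⟨x, rfl⟩⟩, ?_, ⟨x, rfl⟩⟩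
      rw [← hOeq]
      exact hx
    have hF : H ∘ (Subtype.val : ↥(Pset (q : StoneCech X)) → StoneCech X) =
        fun u => (t u).1 := by
      apply Continuous.ext_on hdense (hHc.comp continuous_subtype_val)
        (continuous_subtype_val.comp tc)
      rintro u ⟨x, hx⟩
      show H u.1 = (t u).1
      rw [← hx, hHunit]
      have h2 : jq x = u := Subtype.ext hx
      rw [h2]
    have := congrFun hF qpt
    simp only [Function.comp_apply] at this
    rw [show (qpt : ↥(Pset (q : StoneCech X))).1 = (q : StoneCech X) from rfl] at this
    rw [this, htq]
  -- H preserves the complement of the range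
  have hHrange : ∀ u, u ∉ Set.range (stoneCechUnit : X → StoneCech X) →
      H u ∉ Set.range (stoneCechUnit : X → StoneCech X) := by
    rintro u hu ⟨v, hv⟩
    apply hu
    have h1 : u = H' (stoneCechUnit v) := by rw [hv, hH'H]
    rw [hH'unit] at h1
    rw [h1, ← hyof' v]
    exact ⟨yof' v, rfl⟩
  -- assemble the homeomorphism
  set Hh : StoneCech X ≃ₜ StoneCech X :=
    { toFun := H
      invFun := H'
      left_inv := hH'H
      right_inv := hHH'
      continuous_toFun := hHc
      continuous_invFun := hH'c } with hHh
  set G : ↥((Set.range (stoneCechUnit : X → StoneCech X))ᶜ) →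
      ↥((Set.range (stoneCechUnit : X → StoneCech X))ᶜ) :=
    fun z => ⟨H z.1, hHrange z.1 z.2⟩ with hG
  have hfilters : (𝓝 q : Filter ↥((Set.range (stoneCechUnit : X → StoneCech X))ᶜ)) =
      comap G (𝓝 p) := by
    have h1 : (𝓝 q : Filter ↥((Set.range (stoneCechUnit : X → StoneCech X))ᶜ)) =
        comap (Subtype.val) (𝓝 (q : StoneCech X)) := nhds_subtype _ q
    have h2 : 𝓝 (q : StoneCech X) = comap H (𝓝 (p : StoneCech X)) := by
      have h3 := Hh.nhds_eq_comap (q : StoneCech X)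
      rw [show Hh (q : StoneCech X) = (p : StoneCech X) from hHq] at h3
      exact h3
    have h3 : (𝓝 p : Filter ↥((Set.range (stoneCechUnit : X → StoneCech X))ᶜ)) =
        comap (Subtype.val) (𝓝 (p : StoneCech X)) := nhds_subtype _ p
    rw [h1, h2, Filter.comap_comap, h3, Filter.comap_comap]
    rfl
  haveI := hp
  exact hq (by rw [hfilters]; infer_instance)
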